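/- Assume that B is nilpotent. Then there exists a constant c > 0 such that for every t > 0 and every unit vector ξ ∈ 𝕊^{n−1} ∩ S^⊥, (∫₀¹ |√Q e^{αtBᵀ} ξ|² dα)^{1/2} ≤ c (∫₀¹ |√Q e^{αtBᵀ} ξ|^{2s} dα)^{1/(2s)}. -/

import Mathlib

open Matrix MeasureTheory

/-- The canonical Euclidean norm on `ℝⁿ`. -/
noncomputable def euclNorm {n : ℕ} (v : Fin n → ℝ) : ℝ := Real.sqrt (∑ i, v i ^ 2)

section
open scoped ComplexOrder
/-- The positive semidefinite square root, as `Matrix.PosSemidef.sqrt` was defined in Mathlib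
(December 2024); that declaration has since been removed. -/
noncomputable def Matrix.PosSemidef.sqrt {𝕜 : Type*} [RCLike 𝕜] {m : Type*} [Fintype m]
    [DecidableEq m] {A : Matrix m m 𝕜} (hA : A.PosSemidef) : Matrix m m 𝕜 :=
  hA.1.eigenvectorUnitary.1 * diagonal ((↑) ∘ (Real.sqrt ∘ hA.1.eigenvalues)) *
    (star hA.1.eigenvectorUnitary : Matrix m m 𝕜)
end

/-- The canonical Euclidean scalar product on `ℝⁿ`. -/
def euclInner {n : ℕ} (u v : Fin n → ℝ) : ℝ := ∑ i, u i * v i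

/-- Membership in `S = ⋂_{j=0}^{n-1} Ker(√Q (Bᵀ)^j)`, where `sq` stands for `√Q`. -/
def memS (n : ℕ) (B sq : Matrix (Fin n) (Fin n) ℝ) (η : Fin n → ℝ) : Prop :=
  ∀ j < n, (sq * Bᵀ ^ j).mulVec η = 0

/-- Membership in `S^⊥`, the Euclidean orthogonal complement of `S`. -/
def memSperp (n : ℕ) (B sq : Matrix (Fin n) (Fin n) ℝ) (ξ₀ : Fin n → ℝ) : Prop :=
  ∀ η : Fin n → ℝ, memS n B sq η → euclInner ξ₀ η = 0

/-- Membership in `V_k^⊥`, where `V_k = ⋂_{j=0}^{k} Ker(√Q (Bᵀ)^j)`. -/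
def memVperp (n : ℕ) (B sq : Matrix (Fin n) (Fin n) ℝ) (k : ℕ) (ξ₀ : Fin n → ℝ) : Prop :=
  ∀ η : Fin n → ℝ, (∀ j ≤ k, (sq * Bᵀ ^ j).mulVec η = 0) → euclInner ξ₀ η = 0

/-- The index `k_{ξ₀} = min {0 ≤ k ≤ r : ξ₀ ∈ V_k^⊥}` of a vector `ξ₀ ∈ S^⊥`. -/
noncomputable def kIndex (n : ℕ) (B sq : Matrix (Fin n) (Fin n) ℝ) (r : ℕ)
    (ξ₀ : Fin n → ℝ) : ℕ :=
  sInf {k | k ≤ r ∧ memVperp n B sq k ξ₀}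

/-- `r` is the smallest integer such that `S = ⋂_{j=0}^{r} Ker(√Q (Bᵀ)^j)`. -/
def IsSmallestr (n : ℕ) (B sq : Matrix (Fin n) (Fin n) ℝ) (r : ℕ) : Prop :=
  IsLeast {k | ∀ η : Fin n → ℝ,
    (∀ j ≤ k, (sq * Bᵀ ^ j).mulVec η = 0) ↔ memS n B sq η} r

/-- The symbol `a_t(ξ) = (1/2) ∫₀¹ |√Q e^{α t Bᵀ} ξ|^{2s} dα`. -/
noncomputable def symb (n : ℕ) (B sq : Matrix (Fin n) (Fin n) ℝ) (s t : ℝ)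
    (ξ : Fin n → ℝ) : ℝ :=
  (1 / 2) * ∫ α in (0:ℝ)..1, euclNorm ((sq * NormedSpace.exp ((α * t) • Bᵀ)).mulVec ξ) ^ (2 * s)

/- ### Auxiliary material: equivalence of `L²` and `L^{2s}` norms for polynomials
of bounded degree on `[0,1]`. -/

/-- The polynomial function with coefficient vector `c`. -/
noncomputable def pl (D : ℕ) (c : Fin D → ℝ) (α : ℝ) : ℝ := ∑ i, c i * α ^ (i : ℕ)

lemma pl_cont (D : ℕ) : Continuous (fun q : (Fin D → ℝ) × ℝ => pl D q.1 q.2) := by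
  unfold pl
  exact continuous_finset_sum _ fun i _ =>
    ((continuous_apply i).comp continuous_fst).mul ((continuous_pow (i : ℕ)).comp continuous_snd)

lemma pl_cont_alpha (D : ℕ) (c : Fin D → ℝ) : Continuous (pl D c) :=
  (pl_cont D).comp (continuous_const.prodMk continuous_id)

lemma pl_smul (D : ℕ) (ρ : ℝ) (c : Fin D → ℝ) (α : ℝ) :
    pl D (ρ • c) α = ρ * pl D c α := by
  simp [pl, Finset.mul_sum, mul_assoc]

/-- The polynomial with coefficient vector `c`. -/
noncomputable def plPoly (D : ℕ) (c : Fin D → ℝ) : Polynomial ℝ :=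
  ∑ i : Fin D, Polynomial.C (c i) * Polynomial.X ^ (i : ℕ)

lemma plPoly_eval (D : ℕ) (c : Fin D → ℝ) (α : ℝ) : (plPoly D c).eval α = pl D c α := by
  simp [plPoly, pl, Polynomial.eval_finset_sum]

lemma plPoly_coeff (D : ℕ) (c : Fin D → ℝ) (i : Fin D) :
    (plPoly D c).coeff (i : ℕ) = c i := by
  rw [plPoly, Polynomial.finset_sum_coeff, Finset.sum_eq_single i]
  · simp
  · intro j _ hj
    have h : ¬((i : ℕ) = (j : ℕ)) := fun h => hj (Fin.ext h.symm)
    simp [Polynomial.coeff_C_mul, Polynomial.coeff_X_pow, h]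
  · simp

lemma plPoly_ne_zero {D : ℕ} {c : Fin D → ℝ} (hc : c ≠ 0) : plPoly D c ≠ 0 := by
  intro h
  apply hc
  funext i
  have := plPoly_coeff D c i
  rw [h] at this
  simpa using this.symm

/-- The `L¹` norm on `[0,1]` of the polynomial with coefficients `c`. -/
noncomputable def Nf (D : ℕ) (c : Fin D → ℝ) : ℝ := ∫ α in (0:ℝ)..1, |pl D c α|

/-- The `s`-integral on `[0,1]` of the polynomial with coefficients `c`. -/
noncomputable def Ff (D : ℕ) (s : ℝ) (c : Fin D → ℝ) : ℝ := ∫ α in (0:ℝ)..1, |pl D c α| ^ s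

lemma Nf_cont (D : ℕ) : Continuous (Nf D) := by
  apply intervalIntegral.continuous_parametric_intervalIntegral_of_continuous'
    (f := fun c α => |pl D c α|) (μ := volume)
  exact (pl_cont D).abs

lemma Ff_cont (D : ℕ) (s : ℝ) (hs : 0 < s) : Continuous (Ff D s) := by
  apply intervalIntegral.continuous_parametric_intervalIntegral_of_continuous'
    (f := fun c α => |pl D c α| ^ s) (μ := volume)
  exact ((pl_cont D).abs).rpow_const fun _ => Or.inr hs.le

lemma Nf_nonneg (D : ℕ) (c : Fin D → ℝ) : 0 ≤ Nf D c :=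
  intervalIntegral.integral_nonneg zero_le_one fun α _ => abs_nonneg _

lemma Ff_nonneg (D : ℕ) (s : ℝ) (c : Fin D → ℝ) : 0 ≤ Ff D s c :=
  intervalIntegral.integral_nonneg zero_le_one fun α _ => Real.rpow_nonneg (abs_nonneg _) s

lemma Nf_smul (D : ℕ) (ρ : ℝ) (hρ : 0 ≤ ρ) (c : Fin D → ℝ) : Nf D (ρ • c) = ρ * Nf D c := by
  unfold Nf
  simp only [pl_smul, abs_mul, abs_of_nonneg hρ, intervalIntegral.integral_const_mul]

lemma Ff_smul (D : ℕ) (s : ℝ) (ρ : ℝ) (hρ : 0 ≤ ρ) (c : Fin D → ℝ) :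
    Ff D s (ρ • c) = ρ ^ s * Ff D s c := by
  unfold Ff
  have h : ∀ α : ℝ, |pl D (ρ • c) α| ^ s = ρ ^ s * |pl D c α| ^ s := by
    intro α
    rw [pl_smul, abs_mul, abs_of_nonneg hρ, Real.mul_rpow hρ (abs_nonneg _)]
  simp only [h, intervalIntegral.integral_const_mul]

lemma Ff_pos (D : ℕ) (s : ℝ) (hs : 0 < s) {c : Fin D → ℝ} (hc : c ≠ 0) : 0 < Ff D s c := by
  unfold Ff
  have hcont : Continuous fun α => |pl D c α| ^ s :=
    ((pl_cont_alpha D c).abs).rpow_const fun _ => Or.inr hs.le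
  refine (intervalIntegral.integral_pos_iff_support_of_nonneg_ae ?_ ?_).mpr ?_
  · exact Filter.Eventually.of_forall fun α => Real.rpow_nonneg (abs_nonneg _) s
  · exact hcont.intervalIntegrable 0 1
  refine ⟨zero_lt_one, ?_⟩
  have hroots : Set.Finite {α : ℝ | (plPoly D c).IsRoot α} :=
    Polynomial.finite_setOf_isRoot (plPoly_ne_zero hc)
  have hz : volume {α : ℝ | (plPoly D c).IsRoot α} = 0 := hroots.measure_zero _
  have hsub : Set.Ioc (0:ℝ) 1 \ {α : ℝ | (plPoly D c).IsRoot α} ⊆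
      Function.support (fun α => |pl D c α| ^ s) ∩ Set.Ioc 0 1 := by
    rintro α ⟨h1, h2⟩
    refine ⟨?_, h1⟩
    have hne : pl D c α ≠ 0 := by
      intro h
      exact h2 (by simpa [Polynomial.IsRoot, plPoly_eval] using h)
    have habs : 0 < |pl D c α| := abs_pos.mpr hne
    exact Function.mem_support.mpr (ne_of_gt (Real.rpow_pos_of_pos habs s))
  have h1 : (0 : ENNReal) < volume (Set.Ioc (0:ℝ) 1 \ {α : ℝ | (plPoly D c).IsRoot α}) := by
    rw [measure_diff_null hz, Real.volume_Ioc]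
    norm_num
  exact h1.trans_le (measure_mono hsub)

/-- Equivalence of the `L¹` norm and the `L^s` quasinorm on polynomials of bounded degree. -/
lemma keyLemma (D : ℕ) (hD : 0 < D) (s : ℝ) (hs : 0 < s) :
    ∃ C : ℝ, 0 < C ∧ ∀ c : Fin D → ℝ, Nf D c ≤ C * Ff D s c ^ (1 / s) := by
  haveI : Nontrivial (Fin D → ℝ) :=
    ⟨⟨fun _ => 0, fun _ => 1, fun h => by simpa using congrFun h ⟨0, hD⟩⟩⟩
  obtain ⟨u, hu, hmin⟩ := (isCompact_sphere (0 : Fin D → ℝ) 1).exists_isMinOn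
    (NormedSpace.sphere_nonempty.mpr zero_le_one) (Ff_cont D s hs).continuousOn
  obtain ⟨w, hw, hmax⟩ := (isCompact_sphere (0 : Fin D → ℝ) 1).exists_isMaxOn
    (NormedSpace.sphere_nonempty.mpr zero_le_one) (Nf_cont D).continuousOn
  set m := Ff D s u with hm
  set M := Nf D w with hM
  have hu0 : u ≠ 0 := by
    intro h
    have h1 := mem_sphere_zero_iff_norm.mp hu
    rw [h] at h1
    simp at h1
  have hmpos : 0 < m := Ff_pos D s hs hu0
  have hM0 : 0 ≤ M := Nf_nonneg D w
  have hmy : (0:ℝ) < m ^ (1/s) := Real.rpow_pos_of_pos hmpos _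
  have hC : (0:ℝ) < (M + 1) / m ^ (1/s) := div_pos (by linarith) hmy
  refine ⟨(M + 1) / m ^ (1/s), hC, ?_⟩
  intro c
  by_cases hc : c = 0
  · subst hc
    have h1 : Nf D (0 : Fin D → ℝ) = 0 := by
      unfold Nf pl; simp
    have h2 : Ff D s (0 : Fin D → ℝ) = 0 := by
      unfold Ff pl; simp [Real.zero_rpow hs.ne']
    rw [h1, h2, Real.zero_rpow (by positivity : (1/s : ℝ) ≠ 0), mul_zero]
  · set ρ := ‖c‖ with hρdef
    have hρpos : 0 < ρ := norm_pos_iff.mpr hc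
    have hcu : c = ρ • (ρ⁻¹ • c) := by
      rw [smul_smul, mul_inv_cancel₀ hρpos.ne', one_smul]
    have hsphere : ρ⁻¹ • c ∈ Metric.sphere (0 : Fin D → ℝ) 1 := by
      rw [mem_sphere_zero_iff_norm, norm_smul, norm_inv, norm_norm]
      exact inv_mul_cancel₀ hρpos.ne'
    have h1 : Nf D c ≤ ρ * M := by
      calc Nf D c = ρ * Nf D (ρ⁻¹ • c) := by rw [← Nf_smul D ρ hρpos.le, ← hcu]
        _ ≤ ρ * M := mul_le_mul_of_nonneg_left (hmax hsphere) hρpos.le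
    have h2 : ρ ^ s * m ≤ Ff D s c := by
      calc ρ ^ s * m ≤ ρ ^ s * Ff D s (ρ⁻¹ • c) :=
            mul_le_mul_of_nonneg_left (hmin hsphere) (Real.rpow_nonneg hρpos.le s)
        _ = Ff D s c := by rw [← Ff_smul D s ρ hρpos.le, ← hcu]
    have h3 : ρ * m ^ (1/s) ≤ Ff D s c ^ (1/s) := by
      have h4 := Real.rpow_le_rpow (by positivity) h2 (by positivity : (0:ℝ) ≤ 1/s)
      rwa [Real.mul_rpow (Real.rpow_nonneg hρpos.le s) hmpos.le, ← Real.rpow_mul hρpos.le,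
        mul_one_div_cancel hs.ne', Real.rpow_one] at h4
    have hρle : ρ ≤ Ff D s c ^ (1/s) / m ^ (1/s) := (le_div_iff₀ hmy).mpr h3
    calc Nf D c ≤ ρ * M := h1
      _ ≤ (Ff D s c ^ (1/s) / m ^ (1/s)) * M := mul_le_mul_of_nonneg_right hρle hM0
      _ = M / m ^ (1/s) * Ff D s c ^ (1/s) := by ring
      _ ≤ (M + 1) / m ^ (1/s) * Ff D s c ^ (1/s) := by
          gcongr
          · exact Real.rpow_nonneg (Ff_nonneg D s c) _
          · linarith

/-- The exponential of a nilpotent matrix is a finite sum. -/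
lemma exp_nilp {n : ℕ} (M : Matrix (Fin n) (Fin n) ℝ) {K : ℕ} (hM : M ^ K = 0) :
    NormedSpace.exp M = ∑ j ∈ Finset.range K, ((Nat.factorial j : ℝ))⁻¹ • M ^ j := by
  rw [NormedSpace.exp_eq_tsum (𝕂 := ℝ)]
  refine tsum_eq_sum ?_
  intro j hj
  have hKj : K ≤ j := by
    by_contra h
    exact hj (Finset.mem_range.mpr (lt_of_not_ge h))
  have hz : M ^ j = 0 := by
    calc M ^ j = M ^ K * M ^ (j - K) := by rw [← pow_add, Nat.add_sub_cancel' hKj]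
      _ = 0 := by rw [hM, zero_mul]
  rw [hz, smul_zero]

lemma sum_mulVec {n : ℕ} (ξ : Fin n → ℝ) (f : ℕ → Matrix (Fin n) (Fin n) ℝ) (S : Finset ℕ) :
    (∑ j ∈ S, f j).mulVec ξ = ∑ j ∈ S, (f j).mulVec ξ := by
  induction S using Finset.induction with
  | empty => simp [Matrix.zero_mulVec]
  | @insert a s h ih => rw [Finset.sum_insert h, Finset.sum_insert h, Matrix.add_mulVec, ih]

/-- The squared norm `|√Q e^{αtBᵀ} ξ|²` is a polynomial of degree `< 2k+1` in `α`
when `(Bᵀ)^k = 0`. -/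
lemma rep_lemma {n : ℕ} (t : ℝ) (sq B : Matrix (Fin n) (Fin n) ℝ)
    (k : ℕ) (hKT : Bᵀ ^ k = 0) (ξ : Fin n → ℝ) :
    ∃ c : Fin (2 * k + 1) → ℝ, ∀ α : ℝ,
      euclNorm ((sq * NormedSpace.exp ((α * t) • Bᵀ)).mulVec ξ) ^ 2 = pl (2 * k + 1) c α := by
  set D := 2 * k + 1 with hD
  set v : ℕ → Fin n → ℝ :=
    fun j => (((Nat.factorial j : ℝ))⁻¹ * t ^ j) • ((sq * Bᵀ ^ j).mulVec ξ) with hv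
  have hw : ∀ α : ℝ, ((sq * NormedSpace.exp ((α * t) • Bᵀ)).mulVec ξ)
      = ∑ j ∈ Finset.range k, α ^ j • v j := by
    intro α
    have hM : ((α * t) • Bᵀ) ^ k = 0 := by rw [smul_pow, hKT, smul_zero]
    rw [exp_nilp _ hM, Finset.mul_sum, _root_.sum_mulVec]
    refine Finset.sum_congr rfl fun j _ => ?_
    rw [smul_pow, Matrix.mul_smul, Matrix.mul_smul, Matrix.smul_mulVec,
      Matrix.smul_mulVec, hv, smul_smul, smul_smul]
    congr 1
    rw [mul_pow]
    ring
  set W : Fin n → Polynomial ℝ :=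
    fun i => ∑ j ∈ Finset.range k, Polynomial.C (v j i) * Polynomial.X ^ j with hW
  set P : Polynomial ℝ := ∑ i : Fin n, W i ^ 2 with hP
  have hdeg : P.natDegree < D := by
    have h1 : P.natDegree ≤ 2 * k := by
      refine Polynomial.natDegree_sum_le_of_forall_le _ _ fun i _ => ?_
      refine Polynomial.natDegree_pow_le.trans ?_
      have h2 : (W i).natDegree ≤ k := by
        refine Polynomial.natDegree_sum_le_of_forall_le _ _ fun j hj => ?_
        exact (Polynomial.natDegree_C_mul_X_pow_le _ _).trans
          (Finset.mem_range.mp hj).le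
      omega
    omega
  refine ⟨fun i => P.coeff i, fun α => ?_⟩
  have hplc : pl D (fun i => P.coeff i) α = P.eval α := by
    rw [Polynomial.eval_eq_sum_range' hdeg]
    unfold pl
    exact Fin.sum_univ_eq_sum_range (fun i => P.coeff i * α ^ i) D
  rw [hplc, hw α]
  have hPeval : P.eval α = ∑ i, (∑ j ∈ Finset.range k, α ^ j * v j i) ^ 2 := by
    rw [hP]
    rw [Polynomial.eval_finset_sum]
    refine Finset.sum_congr rfl fun i _ => ?_
    rw [Polynomial.eval_pow, hW, Polynomial.eval_finset_sum]
    congr 1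
    refine Finset.sum_congr rfl fun j _ => ?_
    rw [Polynomial.eval_mul, Polynomial.eval_C, Polynomial.eval_pow, Polynomial.eval_X, mul_comm]
  rw [hPeval]
  unfold euclNorm
  rw [Real.sq_sqrt (Finset.sum_nonneg fun i _ => sq_nonneg _)]
  refine Finset.sum_congr rfl fun i _ => ?_
  congr 1
  simp [Finset.sum_apply]

/-- When `B` is nilpotent, the estimate of Proposition on `M_t` holds for all `t > 0`. -/
theorem statement16 (n : ℕ) (hn : 1 ≤ n) (s : ℝ) (hs : 0 < s)
    (B Q : Matrix (Fin n) (Fin n) ℝ) (hQ : Q.PosSemidef) (hB : IsNilpotent B) :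
    ∃ c : ℝ, 0 < c ∧
      ∀ t : ℝ, 0 < t → ∀ ξ : Fin n → ℝ, euclNorm ξ = 1 → memSperp n B hQ.sqrt ξ →
        (∫ α in (0:ℝ)..1,
            euclNorm ((hQ.sqrt * NormedSpace.exp ((α * t) • Bᵀ)).mulVec ξ) ^ 2) ^ ((1:ℝ) / 2) ≤
          c * (∫ α in (0:ℝ)..1,
            euclNorm ((hQ.sqrt * NormedSpace.exp ((α * t) • Bᵀ)).mulVec ξ) ^ (2 * s))
              ^ (1 / (2 * s)) := by
  obtain ⟨k, hk⟩ := hB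
  have hKT : (Bᵀ) ^ k = 0 := by
    rw [← Matrix.transpose_pow, hk, Matrix.transpose_zero]
  set D := 2 * k + 1 with hD
  obtain ⟨C, hCpos, hC⟩ := keyLemma D (by omega) s hs
  refine ⟨C ^ ((1:ℝ)/2), Real.rpow_pos_of_pos hCpos _, ?_⟩
  intro t ht ξ hξ hperp
  obtain ⟨c, hc⟩ := rep_lemma t hQ.sqrt B k hKT ξ
  have hnn : ∀ α : ℝ, 0 ≤ pl D c α := fun α => by
    rw [← hc α]; exact sq_nonneg _
  have hL : (∫ α in (0:ℝ)..1,
      euclNorm ((hQ.sqrt * NormedSpace.exp ((α * t) • Bᵀ)).mulVec ξ) ^ 2) = Nf D c := by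
    unfold Nf
    refine intervalIntegral.integral_congr fun α _ => ?_
    rw [hc α]
    exact (abs_of_nonneg (hnn α)).symm
  have hR : (∫ α in (0:ℝ)..1,
      euclNorm ((hQ.sqrt * NormedSpace.exp ((α * t) • Bᵀ)).mulVec ξ) ^ (2 * s)) = Ff D s c := by
    unfold Ff
    refine intervalIntegral.integral_congr fun α _ => ?_
    have h0 : (0:ℝ) ≤ euclNorm ((hQ.sqrt * NormedSpace.exp ((α * t) • Bᵀ)).mulVec ξ) :=
      Real.sqrt_nonneg _
    calc euclNorm ((hQ.sqrt * NormedSpace.exp ((α * t) • Bᵀ)).mulVec ξ) ^ (2 * s)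
        = (euclNorm ((hQ.sqrt * NormedSpace.exp ((α * t) • Bᵀ)).mulVec ξ) ^ (2:ℝ)) ^ s := by
          rw [← Real.rpow_mul h0]
      _ = (euclNorm ((hQ.sqrt * NormedSpace.exp ((α * t) • Bᵀ)).mulVec ξ) ^ (2:ℕ)) ^ s := by
          norm_num
      _ = (pl D c α) ^ s := by rw [hc α]
      _ = |pl D c α| ^ s := by rw [abs_of_nonneg (hnn α)]
  rw [hL, hR]
  have h5 : Nf D c ^ ((1:ℝ)/2) ≤ (C * Ff D s c ^ (1/s)) ^ ((1:ℝ)/2) :=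
    Real.rpow_le_rpow (Nf_nonneg D c) (hC c) (by norm_num)
  rw [Real.mul_rpow hCpos.le (Real.rpow_nonneg (Ff_nonneg D s c) _),
    ← Real.rpow_mul (Ff_nonneg D s c)] at h5
  have hexp : (1/s) * ((1:ℝ)/2) = 1/(2*s) := by
    rw [div_mul_div_comm, one_mul, mul_comm]
  rwa [hexp] at h5
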